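/- Assume a solution of the full reformulated gas system on one arc: y⁺ + y⁻ = 1 with y⁺, y⁻ ∈ {0,1}, the four McCormick inequalities for p̄⁺ with bounds ±p̄_max, bounds 0 ≤ p̄⁺ ≤ p̄_max, and the three inequalities R·f² ≥ a²(p̄⁺ + p̄_max·y − p̄_max), R·f² ≤ a²·p̄⁺, R·f² ≤ a²·p̄_max·y with y ∈ {0,1}, a, R > 0. Then a²·(y⁺ − y⁻)·p̄·y = R·f². -/
import Mathlib


theorem stmt_16 (a R pb_max y yp ym pb pbp f : ℝ)
    (ha : a > 0) (hR : R > 0) (hpmax : 0 ≤ pb_max)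
    (hyp : yp = 0 ∨ yp = 1) (hym : ym = 0 ∨ ym = 1) (hsum : yp + ym = 1)
    (hy : y = 0 ∨ y = 1)
    (hpb : -pb_max ≤ pb ∧ pb ≤ pb_max)
    (hpbp : 0 ≤ pbp ∧ pbp ≤ pb_max)
    (hMc1 : pbp ≥ (yp - ym) * pb_max + pb - pb_max)
    (hMc2 : pbp ≥ (yp - ym) * (-pb_max) - pb + (-pb_max))
    (hMc3 : pbp ≤ (yp - ym) * (-pb_max) + pb - (-pb_max))
    (hMc4 : pbp ≤ (yp - ym) * pb_max - pb + pb_max)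
    (hDW1 : R * f ^ 2 ≥ a ^ 2 * (pbp + pb_max * y - pb_max))
    (hDW2 : R * f ^ 2 ≤ a ^ 2 * pbp)
    (hDW3 : R * f ^ 2 ≤ a ^ 2 * pb_max * y) :
    a ^ 2 * (yp - ym) * pb * y = R * f ^ 2 := by
  have hf : 0 ≤ R * f ^ 2 := by positivity
  rcases hy with rfl | rfl
  · nlinarith [sq_nonneg f]
  · rcases hyp with rfl | rfl <;> rcases hym with rfl | rfl <;>
      [skip; nlinarith; nlinarith; skip] <;> norm_num at hsum
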